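/- Let K_n = [2/3, 1] ∩ { ∑_{i=1}^n x_i/4^i : ∀i, x_i ∈ {0,2,3,5} }. Then K_n consists of exactly (4^n − 1)/3 points, which are the arithmetic progression with common difference 1/4^n starting at 3/4^n + ∑_{i=1}^{n-1} 2/4^i and ending at ∑_{i=1}^{n} 3/4^i. -/

import Mathlib

noncomputable def centerOfDistances (X : Set ℝ) : Set ℝ :=
  {α | 0 ≤ α ∧ ∀ x ∈ X, ∃ y ∈ X, |x - y| = α}

noncomputable def subsums (a : ℕ → ℝ) : Set ℝ :=
  {x | ∃ A : Set ℕ, x = ∑' n : A, a n}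

noncomputable def cantorval : Set ℝ :=
  {x | ∃ d : ℕ → ℝ, (∀ n, d n ∈ ({0, 2, 3, 5} : Set ℝ)) ∧
    x = ∑' n : ℕ, d n / 4 ^ (n + 1)}

noncomputable def Kset (n : ℕ) : Set ℝ :=
  Set.Icc (2 / 3) 1 ∩
    {x | ∃ d : ℕ → ℝ, (∀ i, d i ∈ ({0, 2, 3, 5} : Set ℝ)) ∧
      x = ∑ i ∈ Finset.range n, d i / 4 ^ (i + 1)}

/-! ### Auxiliary integer-digit representability -/

def Srep (n : ℕ) (m : ℤ) : Prop :=
  ∃ d : ℕ → ℤ, (∀ i, d i = 0 ∨ d i = 2 ∨ d i = 3 ∨ d i = 5) ∧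
    m = ∑ i ∈ Finset.range n, d i * 4 ^ i

lemma sum_shift (n : ℕ) (d : ℤ) (e : ℕ → ℤ) :
    ∑ i ∈ Finset.range (n+1), (if i = 0 then d else e (i-1)) * 4 ^ i
      = d + 4 * ∑ i ∈ Finset.range n, e i * 4 ^ i := by
  rw [Finset.sum_range_succ' (fun i => (if i = 0 then d else e (i-1)) * 4 ^ i) n]
  simp only [Nat.succ_ne_zero, if_false, if_pos rfl, Nat.add_sub_cancel, pow_zero, mul_one,
    Nat.add_eq_zero, and_false]
  rw [Finset.mul_sum, add_comm]
  congr 1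
  refine Finset.sum_congr rfl fun i _ => ?_
  rw [pow_succ]
  ring

lemma srep_succ_of {n : ℕ} {s : ℤ} (d : ℤ) (hd : d = 0 ∨ d = 2 ∨ d = 3 ∨ d = 5)
    (hs : Srep n s) : Srep (n + 1) (d + 4 * s) := by
  obtain ⟨e, he, rfl⟩ := hs
  exact ⟨fun i => if i = 0 then d else e (i - 1),
    fun i => by by_cases h : i = 0 <;> simp [h, hd, he], (sum_shift n d e).symm⟩

lemma srep_succ_iff {n : ℕ} {m : ℤ} :
    Srep (n + 1) m ↔ ∃ d s, (d = 0 ∨ d = 2 ∨ d = 3 ∨ d = 5) ∧ Srep n s ∧ m = d + 4 * s := by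
  constructor
  · rintro ⟨e, he, rfl⟩
    refine ⟨e 0, ∑ i ∈ Finset.range n, e (i + 1) * 4 ^ i, he 0,
      ⟨fun i => e (i + 1), fun i => he _, rfl⟩, ?_⟩
    calc ∑ i ∈ Finset.range (n+1), e i * 4 ^ i
        = ∑ i ∈ Finset.range (n+1), (if i = 0 then e 0 else e ((i-1)+1)) * 4 ^ i := by
          refine Finset.sum_congr rfl fun i _ => ?_
          by_cases h : i = 0
          · simp [h]
          · have : i - 1 + 1 = i := by omega
            simp [h, this]
      _ = e 0 + 4 * ∑ i ∈ Finset.range n, e (i+1) * 4 ^ i := sum_shift n (e 0) (fun i => e (i+1))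
  · rintro ⟨d, s, hd, hs, rfl⟩
    exact srep_succ_of d hd hs

lemma srep_ne_pow {n : ℕ} {m : ℤ} (h : Srep n m) : m ≠ 4 ^ n := by
  induction n generalizing m with
  | zero =>
    obtain ⟨e, he, rfl⟩ := h
    simp
  | succ n ih =>
    rw [srep_succ_iff] at h
    obtain ⟨d, s, hd, hs, rfl⟩ := h
    have := ih hs
    intro hc
    rw [pow_succ] at hc
    omega

lemma pow4_mod3 (n : ℕ) : (4:ℤ) ^ n % 3 = 1 := by
  induction n with
  | zero => norm_num
  | succ k ihk => rw [pow_succ]; omega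

lemma pow4_mod3_nat (n : ℕ) : 4 ^ n % 3 = 1 := by
  induction n with
  | zero => norm_num
  | succ k ihk => rw [pow_succ]; omega

lemma srep_of : ∀ n : ℕ, 1 ≤ n → ∀ m : ℤ,
    2 * 4 ^ n ≤ 3 * m + 2 → m ≤ 4 ^ n - 1 → Srep n m := by
  intro n
  induction n with
  | zero => omega
  | succ n ih =>
    intro _ m h1 h2
    by_cases hn : n = 0
    · subst hn
      have hm : m = 2 ∨ m = 3 := by norm_num at h1 h2; omega
      exact ⟨fun _ => m, fun i => by show m = 0 ∨ m = 2 ∨ m = 3 ∨ m = 5; omega, by simp⟩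
    · have hn1 : 1 ≤ n := Nat.one_le_iff_ne_zero.mpr hn
      have ht : (4:ℤ) ≤ 4 ^ n := by
        calc (4:ℤ) = 4 ^ 1 := by norm_num
        _ ≤ 4 ^ n := pow_le_pow_right₀ (by norm_num) hn1
      have hdvd : (4:ℤ) ∣ 4 ^ n := dvd_pow_self 4 (by omega)
      have hmod3 : (4:ℤ) ^ n % 3 = 1 := pow4_mod3 n
      set s : ℤ := m / 4 - (if m % 4 = 1 then 1 else 0) with hs
      set d : ℤ := m - 4 * s with hd
      have hps : (4:ℤ)^(n+1) = 4 * 4^n := by rw [pow_succ]; ring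
      rw [hps] at h1 h2
      have hd5 : d = 0 ∨ d = 2 ∨ d = 3 ∨ d = 5 := by
        simp only [hd, hs]; split_ifs <;> omega
      have h1' : 2 * 4 ^ n ≤ 3 * s + 2 := by
        simp only [hs] at *; split_ifs at * <;> omega
      have h2' : s ≤ 4 ^ n - 1 := by
        simp only [hs] at *; split_ifs at * <;> omega
      have hm : m = d + 4 * s := by omega
      rw [hm]
      exact srep_succ_of d hd5 (ih hn1 s h1' h2')

/-! ### Bridge to real sums -/

lemma sum_div_eq (n : ℕ) (e : ℕ → ℤ) :
    ∑ i ∈ Finset.range n, ((e (n-1-i) : ℝ)) / 4 ^ (i+1)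
      = ((∑ i ∈ Finset.range n, e i * 4 ^ i : ℤ) : ℝ) / 4 ^ n := by
  push_cast
  rw [Finset.sum_div]
  rw [← Finset.sum_range_reflect (fun j => ((e j : ℝ)) * 4 ^ j / 4 ^ n) n]
  refine Finset.sum_congr rfl fun i hi => ?_
  simp only [Finset.mem_range] at hi
  have hexp : (n - 1 - i) + (i + 1) = n := by omega
  have hpow : (4:ℝ) ^ n = 4 ^ (n-1-i) * 4 ^ (i+1) := by rw [← pow_add, hexp]
  rw [div_eq_div_iff (by positivity) (by positivity), hpow]
  ring

lemma kset_char (n : ℕ) (hn : 1 ≤ n) (x : ℝ) :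
    x ∈ Kset n ↔ ∃ m : ℤ, 2 * 4 ^ n + 1 ≤ 3 * m ∧ m ≤ 4 ^ n - 1 ∧ x = (m : ℝ) / 4 ^ n := by
  have hpos : (0:ℝ) < 4 ^ n := by positivity
  constructor
  · rintro ⟨⟨hx1, hx2⟩, d, hd, hxe⟩
    set e : ℕ → ℤ := fun i => if d i = 0 then 0 else if d i = 2 then 2 else if d i = 3 then 3 else 5
      with he_def
    have hcast : ∀ i, ((e i : ℤ) : ℝ) = d i := by
      intro i
      have h := hd i
      simp only [Set.mem_insert_iff, Set.mem_singleton_iff] at h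
      rcases h with h|h|h|h <;> norm_num [he_def, h]
    set m : ℤ := ∑ i ∈ Finset.range n, e (n-1-i) * 4 ^ i with hm_def
    have hrep : Srep n m := ⟨fun i => e (n-1-i), fun i => by
      simp only [he_def]; split_ifs <;> tauto, rfl⟩
    have hxm : x = (m : ℝ) / 4 ^ n := by
      rw [hxe, ← sum_div_eq n (fun i => e (n-1-i))]
      refine Finset.sum_congr rfl fun i hi => ?_
      simp only [Finset.mem_range] at hi
      have h1 : n - 1 - (n - 1 - i) = i := by omega
      rw [h1, hcast]
    rw [hxm] at hx1 hx2
    rw [div_le_div_iff₀ (by norm_num) hpos] at hx1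
    rw [div_le_one hpos] at hx2
    have hb1 : (2:ℤ) * 4 ^ n ≤ m * 3 := by exact_mod_cast hx1
    have hb2 : m ≤ (4:ℤ) ^ n := by exact_mod_cast hx2
    have hne : m ≠ 4 ^ n := srep_ne_pow hrep
    have h3 := pow4_mod3 n
    exact ⟨m, by omega, by omega, hxm⟩
  · rintro ⟨m, hb1, hb2, rfl⟩
    have hrep : Srep n m := srep_of n hn m (by omega) hb2
    obtain ⟨e, he, rfl⟩ := hrep
    refine ⟨⟨?_, ?_⟩, fun i => ((e (n-1-i) : ℤ) : ℝ), fun i => ?_, (sum_div_eq n e).symm⟩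
    · rw [div_le_div_iff₀ (by norm_num) hpos]
      push_cast
      have : (2:ℝ) * 4 ^ n + 1 ≤ 3 * ∑ i ∈ Finset.range n, (e i : ℝ) * 4 ^ i := by
        exact_mod_cast hb1
      linarith
    · rw [div_le_one hpos]
      have : (∑ i ∈ Finset.range n, (e i : ℝ) * 4 ^ i) ≤ 4 ^ n - 1 := by exact_mod_cast hb2
      push_cast
      linarith
    · rcases he (n-1-i) with h|h|h|h <;> simp [h]

lemma geom_icc (c : ℝ) (m : ℕ) :
    ∑ i ∈ Finset.Icc 1 m, c / 4 ^ i = c * (4 ^ m - 1) / (3 * 4 ^ m) := by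
  induction m with
  | zero => simp
  | succ m ih =>
    rw [Finset.sum_Icc_succ_top (by omega : 1 ≤ m + 1), ih]
    have h4 : (0:ℝ) < 4 ^ m := by positivity
    field_simp
    ring

theorem stmt9 (n : ℕ) (hn : 1 ≤ n) :
    Kset n =
      (fun k : ℕ => (3 / 4 ^ n + ∑ i ∈ Finset.Icc 1 (n - 1), (2 : ℝ) / 4 ^ i)
        + (k : ℝ) * (1 / 4 ^ n)) '' {k : ℕ | k < (4 ^ n - 1) / 3} ∧
    (Kset n).ncard = (4 ^ n - 1) / 3 ∧
    (3 / 4 ^ n + ∑ i ∈ Finset.Icc 1 (n - 1), (2 : ℝ) / 4 ^ i)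
        + (((4 ^ n - 1) / 3 - 1 : ℕ) : ℝ) * (1 / 4 ^ n)
      = ∑ i ∈ Finset.Icc 1 n, (3 : ℝ) / 4 ^ i := by
  have hpos : (0:ℝ) < 4 ^ n := by positivity
  -- N, M arithmetic
  set N : ℕ := (4 ^ n - 1) / 3 with hN_def
  have h4n : 4 ≤ 4 ^ n := by
    calc 4 = 4 ^ 1 := by norm_num
    _ ≤ 4 ^ n := Nat.pow_le_pow_right (by norm_num) hn
  have hmodn : 4 ^ n % 3 = 1 := pow4_mod3_nat n
  have hN : 3 * N = 4 ^ n - 1 := by omega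
  have hmodz : (4:ℤ) ^ n % 3 = 1 := pow4_mod3 n
  obtain ⟨M, hM⟩ : ∃ M : ℤ, 3 * M = 2 * 4 ^ n + 1 := ⟨(2 * 4 ^ n + 1) / 3, by omega⟩
  have hNZ : 3 * (N : ℤ) = 4 ^ n - 1 := by
    have hcast : ((4 ^ n : ℕ) : ℤ) = 4 ^ n := by push_cast; ring
    omega
  -- the base point a
  set a : ℝ := 3 / 4 ^ n + ∑ i ∈ Finset.Icc 1 (n - 1), (2 : ℝ) / 4 ^ i with ha_def
  have hpow_split : (4:ℝ) ^ n = 4 * 4 ^ (n - 1) := by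
    conv_lhs => rw [show n = (n - 1) + 1 by omega]
    rw [pow_succ]; ring
  have hp1 : (0:ℝ) < 4 ^ (n-1) := by positivity
  have hMR : (3:ℝ) * (M:ℝ) = 2 * 4 ^ n + 1 := by exact_mod_cast hM
  have hM' : (M:ℝ) = (8 * 4 ^ (n-1) + 1) / 3 := by
    rw [hpow_split] at hMR; linarith
  have ha : a = (M : ℝ) / 4 ^ n := by
    rw [ha_def, geom_icc, hpow_split, hM']
    field_simp
    ring
  -- part 1 : set equality
  have hset : Kset n =
      (fun k : ℕ => a + (k : ℝ) * (1 / 4 ^ n)) '' {k : ℕ | k < N} := by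
    ext x
    rw [kset_char n hn x]
    constructor
    · rintro ⟨m, hb1, hb2, rfl⟩
      refine ⟨(m - M).toNat, ?_, ?_⟩
      · simp only [Set.mem_setOf_eq]
        omega
      · simp only
        rw [ha]
        have hk : ((m - M).toNat : ℝ) = (m : ℝ) - (M : ℝ) := by
          have : ((m - M).toNat : ℤ) = m - M := by omega
          exact_mod_cast this
        rw [hk]
        field_simp
        ring
    · rintro ⟨k, hk, rfl⟩
      simp only [Set.mem_setOf_eq] at hk
      refine ⟨M + k, by omega, by omega, ?_⟩
      rw [ha]
      push_cast
      field_simp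
  refine ⟨hset, ?_, ?_⟩
  -- part 2 : cardinality
  · rw [hset]
    have hinj : Function.Injective (fun k : ℕ => a + (k : ℝ) * (1 / 4 ^ n)) := by
      intro k k' h
      simp only at h
      have h1 : (k:ℝ) * (1 / 4 ^ n) = (k':ℝ) * (1 / 4 ^ n) := by linarith
      field_simp at h1
      exact_mod_cast h1
    rw [Set.ncard_image_of_injective _ hinj]
    have : {k : ℕ | k < N} = ↑(Finset.range N) := by
      ext k; simp
    rw [this, Set.ncard_coe_finset, Finset.card_range]
  -- part 3 : endpoint
  · have hN1 : 1 ≤ N := by omega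
    have hNR : (3:ℝ) * (N:ℝ) = 4 ^ n - 1 := by exact_mod_cast hNZ
    have hNm1 : ((N - 1 : ℕ) : ℝ) = (N : ℝ) - 1 := by
      push_cast [Nat.cast_sub hN1]
      ring
    have hN' : (N:ℝ) = (4 ^ n - 1) / 3 := by linarith
    have hM2 : (M:ℝ) = (2 * 4 ^ n + 1) / 3 := by linarith
    rw [geom_icc, ha, hNm1, hN', hM2]
    field_simp
    ring
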